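/- For real ν ≪ 0 (or complex ν with this formula interpreted via falling factorials), the i-th partial derivative with respect to x_n of (|x|² + x_n²)^{-ν} restricted to x_n = 0 equals 0 if i = 2j+1 is odd, and equals (-1)^j (2j)! Γ(ν+j)/(j! Γ(ν)) · |x|^{-2ν-2j} if i = 2j is even, for x ∈ ℝ^{n-1} with x ≠ 0. -/

import Mathlib

open Complex

noncomputable section

variable {a : ℝ} {w ν : ℂ}

lemma smoothAux (ha : 0 < a) (w : ℂ) :
    ContDiff ℝ ⊤ (fun t : ℝ => ((a + t ^ 2 : ℝ) : ℂ) ^ w) := by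
  have heq : (fun t : ℝ => ((a + t ^ 2 : ℝ) : ℂ) ^ w)
      = (fun z : ℂ => ((a : ℂ) + z ^ 2) ^ w) ∘ (fun t : ℝ => (t : ℂ)) := by
    funext t; simp [Function.comp]
  rw [heq]
  rw [contDiff_iff_contDiffAt]
  intro t
  have houter : AnalyticAt ℂ (fun z : ℂ => ((a : ℂ) + z ^ 2) ^ w) ((t : ℂ)) := by
    apply AnalyticAt.cpow
    · exact analyticAt_const.add (analyticAt_id.pow 2)
    · exact analyticAt_const
    · rw [Complex.mem_slitPlane_iff]
      left
      simp only [add_re, ofReal_re]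
      push_cast
      simp only [← ofReal_pow, ← ofReal_add, ofReal_re]
      positivity
  have h1 : ContDiffAt ℝ ⊤ (fun z : ℂ => ((a : ℂ) + z ^ 2) ^ w) ((t : ℂ)) :=
    (houter.contDiffAt).restrict_scalars ℝ
  exact h1.comp t Complex.ofRealCLM.contDiff.contDiffAt

lemma hasDerivAux (ha : 0 < a) (w : ℂ) (t : ℝ) :
    HasDerivAt (fun t : ℝ => ((a + t ^ 2 : ℝ) : ℂ) ^ w)
      (w * ((a + t ^ 2 : ℝ) : ℂ) ^ (w - 1) * (2 * (t : ℂ))) t := by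
  have h0 : ((a : ℂ) + (t : ℂ) ^ 2) ∈ Complex.slitPlane := by
    rw [Complex.mem_slitPlane_iff]; left
    simp only [add_re, ofReal_re, ← ofReal_pow, ← ofReal_add]
    positivity
  have h1 : HasDerivAt (fun z : ℂ => ((a : ℂ) + z ^ 2)) (2 * (t : ℂ)) (t : ℝ) := by
    simpa using ((hasDerivAt_pow 2 ((t : ℝ) : ℂ)).const_add (a : ℂ))
  have h2 := (h1.cpow_const (c := w) h0).comp_ofReal
  have heq : (fun y : ℝ => ((a : ℂ) + (y : ℂ) ^ 2) ^ w)
      = (fun t : ℝ => ((a + t ^ 2 : ℝ) : ℂ) ^ w) := by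
    funext y; norm_cast
  rw [heq] at h2
  convert h2 using 1
  norm_cast

lemma iter_add {f g : ℝ → ℂ} (hf : ContDiff ℝ ⊤ f) (hg : ContDiff ℝ ⊤ g) (m : ℕ) (t : ℝ) :
    iteratedDeriv m (fun s => f s + g s) t = iteratedDeriv m f t + iteratedDeriv m g t := by
  simp only [← iteratedDerivWithin_univ]
  exact iteratedDerivWithin_add (Set.mem_univ t) uniqueDiffOn_univ
    (hf.of_le le_top).contDiffWithinAt (hg.of_le le_top).contDiffWithinAt

lemma iter_cmul {f : ℝ → ℂ} (hf : ContDiff ℝ ⊤ f) (c : ℂ) (m : ℕ) (t : ℝ) :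
    iteratedDeriv m (fun s => c * f s) t = c * iteratedDeriv m f t := by
  simp only [← iteratedDerivWithin_univ]
  have := iteratedDerivWithin_const_smul (R := ℂ) (f := f) (s := Set.univ) (n := m)
    (Set.mem_univ t) uniqueDiffOn_univ c (hf.of_le le_top).contDiffWithinAt
  simpa [smul_eq_mul] using this

lemma diff_iter {f : ℝ → ℂ} (hf : ContDiff ℝ ⊤ f) (m : ℕ) :
    Differentiable ℝ (iteratedDeriv m f) :=
  hf.differentiable_iteratedDeriv m (by exact_mod_cast WithTop.coe_lt_top (m : ℕ∞))

lemma smooth_ofReal : ContDiff ℝ ⊤ (fun t : ℝ => (t : ℂ)) := Complex.ofRealCLM.contDiff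

lemma iter_tmul {f : ℝ → ℂ} (hf : ContDiff ℝ ⊤ f) (m : ℕ) :
    iteratedDeriv (m + 1) (fun s : ℝ => (s : ℂ) * f s)
      = fun t : ℝ => (t : ℂ) * iteratedDeriv (m + 1) f t
          + ((m : ℂ) + 1) * iteratedDeriv m f t := by
  have hofr : Differentiable ℝ (fun t : ℝ => (t : ℂ)) := smooth_ofReal.differentiable (by simp)
  have hder : ∀ t : ℝ, HasDerivAt (fun t : ℝ => (t : ℂ)) 1 t := fun t => by
    simpa using (hasDerivAt_id t).ofReal_comp
  induction m with
  | zero =>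
    funext t
    rw [iteratedDeriv_one]
    rw [deriv_fun_mul (hofr t) ((hf.differentiable (by simp)) t)]
    rw [(hder t).deriv]
    simp [iteratedDeriv_one, iteratedDeriv_zero]
    ring
  | succ m ih =>
    funext t
    rw [iteratedDeriv_succ, ih]
    have d1 : DifferentiableAt ℝ (fun t : ℝ => (t : ℂ) * iteratedDeriv (m + 1) f t) t :=
      (hofr t).mul ((diff_iter hf (m + 1)) t)
    have d2 : DifferentiableAt ℝ (fun t : ℝ => ((m : ℂ) + 1) * iteratedDeriv m f t) t :=
      ((diff_iter hf m) t).const_mul _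
    rw [deriv_fun_add d1 d2]
    rw [deriv_fun_mul (hofr t) ((diff_iter hf (m + 1)) t)]
    rw [deriv_const_mul _ ((diff_iter hf m) t)]
    rw [(hder t).deriv, ← iteratedDeriv_succ, ← iteratedDeriv_succ]
    push_cast
    ring

lemma iter_tmul_zero {f : ℝ → ℂ} (hf : ContDiff ℝ ⊤ f) (m : ℕ) :
    iteratedDeriv m (fun s : ℝ => (s : ℂ) * f s) 0 = (m : ℂ) * iteratedDeriv (m - 1) f 0 := by
  cases m with
  | zero => simp
  | succ m => rw [iter_tmul hf m]; push_cast; simp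

lemma recAux (ha : 0 < a) (ν : ℂ) (k : ℕ) :
    (a : ℂ) * iteratedDeriv (k + 2) (fun t : ℝ => ((a + t ^ 2 : ℝ) : ℂ) ^ (-ν)) 0
      = -(((k : ℂ) + 1) * ((k : ℂ) + 2 * ν))
          * iteratedDeriv k (fun t : ℝ => ((a + t ^ 2 : ℝ) : ℂ) ^ (-ν)) 0 := by
  set f : ℝ → ℂ := fun t : ℝ => ((a + t ^ 2 : ℝ) : ℂ) ^ (-ν) with hfdef
  set p : ℝ → ℂ := fun t : ℝ => -ν * ((a + t ^ 2 : ℝ) : ℂ) ^ (-ν - 1) * (2 * (t : ℂ)) with hpdef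
  have hf : ContDiff ℝ ⊤ f := smoothAux ha (-ν)
  have hp : ContDiff ℝ ⊤ p := by
    have h1 : ContDiff ℝ ⊤ (fun t : ℝ => ((a + t ^ 2 : ℝ) : ℂ) ^ (-ν - 1)) := smoothAux ha _
    exact (contDiff_const.mul h1).mul (contDiff_const.mul smooth_ofReal)
  have hderiv : deriv f = p := by
    funext t
    exact (hasDerivAux ha (-ν) t).deriv
  have hzero : ∀ t : ℝ, ((a + t ^ 2 : ℝ) : ℂ) ≠ 0 := by
    intro t
    simp only [ne_eq, Complex.ofReal_eq_zero]
    positivity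
  have E : (fun t : ℝ => (a : ℂ) * p t + (t : ℂ) * ((t : ℂ) * p t))
      = fun t : ℝ => (-2 * ν) * ((t : ℂ) * f t) := by
    funext t
    have hzp : ((a + t ^ 2 : ℝ) : ℂ) ^ (-ν)
        = ((a + t ^ 2 : ℝ) : ℂ) ^ (-ν - 1) * ((a + t ^ 2 : ℝ) : ℂ) := by
      have h := Complex.cpow_add (-ν - 1) 1 (hzero t)
      rw [Complex.cpow_one, show -ν - 1 + 1 = -ν from by ring] at h
      exact h
    have hcast : ((a : ℂ) + (t : ℂ) ^ 2) = ((a + t ^ 2 : ℝ) : ℂ) := by norm_cast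
    simp only [hfdef, hpdef]
    rw [hzp]
    linear_combination (2 * (t : ℂ) * (-ν) * ((a + t ^ 2 : ℝ) : ℂ) ^ (-ν - 1)) * hcast
  have happ := congrFun (congrArg (iteratedDeriv (k + 1)) E) 0
  have hsm1 : ContDiff ℝ ⊤ (fun t : ℝ => (a : ℂ) * p t) := contDiff_const.mul hp
  have hsm2 : ContDiff ℝ ⊤ (fun t : ℝ => (t : ℂ) * p t) := smooth_ofReal.mul hp
  have hsm3 : ContDiff ℝ ⊤ (fun t : ℝ => (t : ℂ) * ((t : ℂ) * p t)) := smooth_ofReal.mul hsm2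
  have hsm4 : ContDiff ℝ ⊤ (fun t : ℝ => (t : ℂ) * f t) := smooth_ofReal.mul hf
  rw [iter_add hsm1 hsm3, iter_cmul hp, iter_cmul hsm4, iter_tmul_zero hsm2,
    iter_tmul_zero hf] at happ
  simp only [Nat.add_sub_cancel] at happ
  have hps : iteratedDeriv (k + 1) p 0 = iteratedDeriv (k + 2) f 0 := by
    conv_rhs => rw [show k + 2 = (k + 1) + 1 from rfl, iteratedDeriv_succ']
    rw [hderiv]
  have hks : (k : ℂ) * iteratedDeriv (k - 1) p 0 = (k : ℂ) * iteratedDeriv k f 0 := by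
    cases k with
    | zero => simp
    | succ k' =>
      congr 1
      simp only [Nat.add_sub_cancel]
      conv_rhs => rw [iteratedDeriv_succ']
      rw [hderiv]
  rw [iter_tmul_zero hp, hps, hks] at happ
  push_cast at happ ⊢
  linear_combination happ

end

theorem stmt_3 (n : ℕ) (hn : 2 ≤ n) (ν : ℂ)
    (x : EuclideanSpace ℝ (Fin (n - 1))) (hx : x ≠ 0) (j : ℕ) :
    iteratedDeriv (2 * j + 1)
        (fun t : ℝ => ((‖x‖ ^ 2 + t ^ 2 : ℝ) : ℂ) ^ (-ν)) 0 = 0 ∧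
    iteratedDeriv (2 * j)
        (fun t : ℝ => ((‖x‖ ^ 2 + t ^ 2 : ℝ) : ℂ) ^ (-ν)) 0 =
      (-1) ^ j * (((2 * j).factorial : ℂ) / (j.factorial : ℂ)) *
        (∏ k ∈ Finset.range j, (ν + k)) * (‖x‖ : ℂ) ^ (-2 * ν - 2 * (j : ℂ)) := by
  have hx0 : ‖x‖ ≠ 0 := norm_ne_zero_iff.mpr hx
  have hxpos : (0 : ℝ) < ‖x‖ := (norm_nonneg x).lt_of_ne' hx0
  set a : ℝ := ‖x‖ ^ 2 with hadef
  have ha : 0 < a := by positivity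
  have hane : (a : ℂ) ≠ 0 := by
    simp only [ne_eq, Complex.ofReal_eq_zero]
    exact ne_of_gt ha
  have hnx : ((‖x‖ : ℝ) : ℂ) ≠ 0 := by
    simp only [ne_eq, Complex.ofReal_eq_zero]; exact hx0
  set f : ℝ → ℂ := fun t : ℝ => ((a + t ^ 2 : ℝ) : ℂ) ^ (-ν) with hfdef
  -- the power identity
  have hcp : ∀ w : ℂ, ((a : ℝ) : ℂ) ^ w = ((‖x‖ : ℝ) : ℂ) ^ (2 * w) := by
    intro w
    have hlog : Complex.log ((‖x‖ : ℝ) : ℂ) = ((Real.log ‖x‖ : ℝ) : ℂ) :=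
      (Complex.ofReal_log (le_of_lt hxpos)).symm
    have h1 : ((‖x‖ : ℝ) : ℂ) ^ ((2 : ℂ) * w) = (((‖x‖ : ℝ) : ℂ) ^ (2 : ℂ)) ^ w := by
      apply Complex.cpow_mul
      · rw [hlog]; simp only [← Complex.ofReal_ofNat, ← Complex.ofReal_mul, Complex.ofReal_im]
        exact neg_neg_iff_pos.mpr Real.pi_pos
      · rw [hlog]; simp only [← Complex.ofReal_ofNat, ← Complex.ofReal_mul, Complex.ofReal_im]
        exact le_of_lt Real.pi_pos
    rw [h1]
    congr 1
    rw [show (2 : ℂ) = ((2 : ℕ) : ℂ) from by norm_cast, Complex.cpow_natCast]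
    push_cast [hadef]
    ring
  -- base cases
  have hD0 : iteratedDeriv 0 f 0 = ((a : ℝ) : ℂ) ^ (-ν) := by
    rw [iteratedDeriv_zero, hfdef]
    norm_num
  have hD1 : iteratedDeriv 1 f 0 = 0 := by
    rw [iteratedDeriv_one, hfdef, (hasDerivAux ha (-ν) 0).deriv]
    simp
  constructor
  · -- odd case
    induction j with
    | zero => simpa using hD1
    | succ j ih =>
      have h := recAux ha ν (2 * j + 1)
      rw [show 2 * (j + 1) + 1 = (2 * j + 1) + 2 from by ring]
      rw [ih, mul_zero] at h
      exact (mul_eq_zero.mp h).resolve_left hane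
  · -- even case
    induction j with
    | zero =>
      rw [show 2 * 0 = 0 from rfl, hD0, hcp (-ν)]
      simp only [pow_zero, Nat.factorial_zero, Finset.range_zero, Finset.prod_empty]
      rw [show -2 * ν - 2 * ((0 : ℕ) : ℂ) = 2 * (-ν) from by push_cast; ring]
      norm_num
    | succ j ih =>
      have h := recAux ha ν (2 * j)
      rw [ih] at h
      rw [show 2 * (j + 1) = (2 * j) + 2 from by ring]
      apply mul_left_cancel₀ hane
      rw [h]
      -- expand the RHS pieces
      have hprod : ∏ k ∈ Finset.range (j + 1), (ν + (k : ℂ))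
          = (∏ k ∈ Finset.range j, (ν + (k : ℂ))) * (ν + (j : ℂ)) :=
        Finset.prod_range_succ _ _
      have hfact1 : ((2 * j + 2).factorial : ℂ)
          = (2 * (j : ℂ) + 2) * ((2 * (j : ℂ) + 1) * ((2 * j).factorial : ℂ)) := by
        rw [show 2 * j + 2 = (2 * j + 1) + 1 from by ring]
        rw [Nat.factorial_succ, show 2 * j + 1 = (2 * j) + 1 from rfl, Nat.factorial_succ]
        push_cast
        ring
      have hfact2 : ((j + 1).factorial : ℂ) = ((j : ℂ) + 1) * (j.factorial : ℂ) := by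
        rw [Nat.factorial_succ]; push_cast; ring
      have hpow : ((‖x‖ : ℝ) : ℂ) ^ (-2 * ν - 2 * (((j : ℕ) + 1 : ℕ) : ℂ))
          = ((‖x‖ : ℝ) : ℂ) ^ (-2 * ν - 2 * ((j : ℕ) : ℂ)) * ((a : ℂ))⁻¹ := by
        rw [show (-2 * ν - 2 * (((j : ℕ) + 1 : ℕ) : ℂ))
            = (-2 * ν - 2 * ((j : ℕ) : ℂ)) + (2 * (-1)) from by push_cast; ring]
        rw [Complex.cpow_add _ _ hnx, ← hcp (-1), Complex.cpow_neg_one]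
      have hjf : ((j.factorial : ℂ)) ≠ 0 := by
        exact_mod_cast Nat.cast_ne_zero.mpr (Nat.factorial_ne_zero j)
      have hj1 : ((j : ℂ) + 1) ≠ 0 := Nat.cast_add_one_ne_zero j
      have hane' : ((‖x‖ ^ 2 : ℝ) : ℂ) ≠ 0 := hane
      rw [hprod, hfact1, hfact2, hpow]
      field_simp [hane', hj1]
      push_cast
      ring
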